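/- Let H₁, H₂ be self-adjoint operators on finite-dimensional Hilbert spaces ℋ₁, ℋ₂ of the same dimension, with increasing eigenvalue sequences (λ_i^{(1)}) and (λ_i^{(2)}) (repeated by multiplicity). For every ε > 0 there is δ > 0 such that: if there exists a unitary W : ℋ₁ → ℋ₂ with max_{|t|≤1} ‖e^{itH₂} W e^{−itH₁} − W‖ < δ, then |λ_i^{(1)} − λ_i^{(2)}| < ε for all i. -/

import Mathlib

open scoped InnerProductSpace

section AuxAll
set_option linter.unusedSectionVars false
variable {H : Type*} [NormedAddCommGroup H] [InnerProductSpace ℂ H] [FiniteDimensional ℂ H]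

/-- exp applied to an eigenvector. -/
lemma exp_apply_eigenvector (T : H →L[ℂ] H) (x : H) (μ : ℂ) (h : T x = μ • x) :
    NormedSpace.exp T x = Complex.exp μ • x := by
  have hpow : ∀ k : ℕ, (T ^ k) x = μ ^ k • x := by
    intro k; induction k with
    | zero => simp
    | succ k ih =>
      rw [pow_succ, ContinuousLinearMap.mul_apply, h, map_smul, ih, smul_smul, mul_comm,
        ← pow_succ]
  have hsum : Summable fun k : ℕ => ((k.factorial : ℂ))⁻¹ • T ^ k :=
    NormedSpace.expSeries_summable' (𝕂 := ℂ) T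
  have := (ContinuousLinearMap.apply ℂ H x).map_tsum hsum
  rw [NormedSpace.exp_eq_tsum ℂ]
  simp only [ContinuousLinearMap.apply_apply] at this
  rw [this]
  have h2 : ∀ k : ℕ, ((k.factorial : ℂ))⁻¹ • (T ^ k) x = (((k.factorial : ℂ))⁻¹ * μ ^ k) • x := by
    intro k; rw [hpow, smul_smul]
  simp only [ContinuousLinearMap.coe_smul', Pi.smul_apply]
  calc (∑' k : ℕ, ((k.factorial : ℂ))⁻¹ • (T ^ k) x)
      = ∑' k : ℕ, (((k.factorial : ℂ))⁻¹ * μ ^ k) • x := tsum_congr fun k => h2 k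
    _ = (∑' k : ℕ, ((k.factorial : ℂ))⁻¹ * μ ^ k) • x := by
        rw [Summable.tsum_smul_const]
        exact (NormedSpace.expSeries_summable' (𝕂 := ℂ) μ)
    _ = Complex.exp μ • x := by
        congr 1
        rw [Complex.exp_eq_exp_ℂ, NormedSpace.exp_eq_tsum ℂ]
        simp [smul_eq_mul]

lemma diag_apply {n : ℕ} (a : OrthonormalBasis (Fin n) ℂ H) (A : H →L[ℂ] H)
    (μ : Fin n → ℂ) (hA : ∀ j, A (a j) = μ j • a j) (x : H) :
    A x = ∑ j, (⟪a j, x⟫_ℂ * μ j) • a j := by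
  conv_lhs => rw [← a.sum_repr' x]
  rw [map_sum]
  refine Finset.sum_congr rfl fun j _ => ?_
  rw [map_smul, hA, smul_smul]

lemma parseval_fin {n : ℕ} (a : OrthonormalBasis (Fin n) ℂ H) (x : H) :
    ∑ j, ‖⟪a j, x⟫_ℂ‖ ^ 2 = ‖x‖ ^ 2 := by
  have h := a.orthonormal.inner_sum (fun j => ⟪a j, x⟫_ℂ) (fun j => ⟪a j, x⟫_ℂ) Finset.univ
  rw [a.sum_repr' x] at h
  have h2 : ⟪x, x⟫_ℂ = ((‖x‖ ^ 2 : ℝ) : ℂ) := by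
    rw [inner_self_eq_norm_sq_to_K]; norm_cast
  rw [h2] at h
  have : ∀ j : Fin n, (starRingEnd ℂ) ⟪a j, x⟫_ℂ * ⟪a j, x⟫_ℂ = ((‖⟪a j, x⟫_ℂ‖ ^ 2 : ℝ) : ℂ) := by
    intro j; rw [RCLike.conj_mul]; norm_cast
  rw [Finset.sum_congr rfl (fun j _ => this j)] at h
  exact_mod_cast h.symm

lemma diag_norm_le {n : ℕ} (a : OrthonormalBasis (Fin n) ℂ H) (A : H →L[ℂ] H)
    (μ : Fin n → ℂ) (hA : ∀ j, A (a j) = μ j • a j) (C : ℝ) (hC : 0 ≤ C)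
    (hμ : ∀ j, ‖μ j‖ ≤ C) : ‖A‖ ≤ C := by
  refine A.opNorm_le_bound hC fun x => ?_
  have h1 := diag_apply a A μ hA x
  have h2 := a.orthonormal.inner_sum (fun j => ⟪a j, x⟫_ℂ * μ j) (fun j => ⟪a j, x⟫_ℂ * μ j)
    Finset.univ
  rw [← h1] at h2
  have h3 : ‖A x‖ ^ 2 = ∑ j, ‖⟪a j, x⟫_ℂ * μ j‖ ^ 2 := by
    have h4 : ⟪A x, A x⟫_ℂ = ((‖A x‖ ^ 2 : ℝ) : ℂ) := by
      rw [inner_self_eq_norm_sq_to_K]; norm_cast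
    have h5 : ∀ j : Fin n, (starRingEnd ℂ) (⟪a j, x⟫_ℂ * μ j) * (⟪a j, x⟫_ℂ * μ j)
        = ((‖⟪a j, x⟫_ℂ * μ j‖ ^ 2 : ℝ) : ℂ) := by
      intro j; rw [RCLike.conj_mul]; norm_cast
    rw [h4, Finset.sum_congr rfl (fun j _ => h5 j)] at h2
    exact_mod_cast h2
  have h6 : ‖A x‖ ^ 2 ≤ (C * ‖x‖) ^ 2 := by
    rw [h3]
    calc ∑ j, ‖⟪a j, x⟫_ℂ * μ j‖ ^ 2 ≤ ∑ j, C ^ 2 * ‖⟪a j, x⟫_ℂ‖ ^ 2 := by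
          refine Finset.sum_le_sum fun j _ => ?_
          rw [norm_mul, mul_pow]
          rw [mul_comm (‖⟪a j, x⟫_ℂ‖ ^ 2)]
          gcongr
          exact hμ j
      _ = C ^ 2 * ‖x‖ ^ 2 := by rw [← Finset.mul_sum, parseval_fin]
      _ = (C * ‖x‖) ^ 2 := by ring
  nlinarith [norm_nonneg (A x), mul_nonneg hC (norm_nonneg x)]

lemma diag_inner_formula {n : ℕ} (a : OrthonormalBasis (Fin n) ℂ H) (A : H →L[ℂ] H)
    (α : Fin n → ℝ) (hA : ∀ j, A (a j) = (α j : ℂ) • a j) (x : H) :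
    Complex.re ⟪x, A x⟫_ℂ = ∑ j, α j * ‖⟪a j, x⟫_ℂ‖ ^ 2 := by
  rw [diag_apply a A _ hA x, inner_sum]
  have : ∀ j : Fin n, ⟪x, (⟪a j, x⟫_ℂ * (α j : ℂ)) • a j⟫_ℂ
      = (α j : ℂ) * ((‖⟪a j, x⟫_ℂ‖ ^ 2 : ℝ) : ℂ) := by
    intro j
    rw [inner_smul_right, ← inner_conj_symm (a j) x, RCLike.norm_conj]
    have h7 := RCLike.conj_mul (K := ℂ) ⟪x, a j⟫_ℂ
    push_cast at h7 ⊢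
    rw [mul_comm ((starRingEnd ℂ) ⟪x, a j⟫_ℂ) ((α j : ℂ)), mul_assoc, h7]
    norm_cast
    exact (Complex.ofReal_mul _ _).symm
  rw [Finset.sum_congr rfl (fun j _ => this j)]
  push_cast
  rw [Complex.re_sum]
  refine Finset.sum_congr rfl fun j _ => ?_
  norm_cast

lemma weyl_one_sided {n : ℕ} (A B : H →L[ℂ] H) (α β : Fin n → ℝ)
    (hmα : Monotone α) (hmβ : Monotone β)
    (a c : OrthonormalBasis (Fin n) ℂ H)
    (hA : ∀ j, A (a j) = (α j : ℂ) • a j) (hB : ∀ j, B (c j) = (β j : ℂ) • c j)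
    (i : Fin n) : β i - α i ≤ ‖A - B‖ := by
  classical
  have hn : Module.finrank ℂ H = n := by
    rw [Module.finrank_eq_card_basis a.toBasis, Fintype.card_fin]
  set E : Submodule ℂ H :=
    Submodule.span ℂ (Set.range fun j : (Finset.Iic i : Finset (Fin n)) => a ↑j) with hE
  set F : Submodule ℂ H :=
    Submodule.span ℂ (Set.range fun j : (Finset.Ici i : Finset (Fin n)) => c ↑j) with hF
  have hcardE : Module.finrank ℂ E = i + 1 := by
    have hli : LinearIndependent ℂ (fun j : (Finset.Iic i : Finset (Fin n)) => a ↑j) :=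
      (a.orthonormal.comp _ Subtype.val_injective).linearIndependent
    rw [hE, finrank_span_eq_card hli, Fintype.card_coe, Fin.card_Iic]
  have hcardF : Module.finrank ℂ F = n - i := by
    have hli : LinearIndependent ℂ (fun j : (Finset.Ici i : Finset (Fin n)) => c ↑j) :=
      (c.orthonormal.comp _ Subtype.val_injective).linearIndependent
    rw [hF, finrank_span_eq_card hli, Fintype.card_coe, Fin.card_Ici]
  have hsup : Module.finrank ℂ (E ⊔ F : Submodule ℂ H) ≤ n := hn ▸ Submodule.finrank_le _
  have hkey := Submodule.finrank_sup_add_finrank_inf_eq E F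
  have hpos : 0 < Module.finrank ℂ (E ⊓ F : Submodule ℂ H) := by
    have hi : (i : ℕ) < n := i.isLt
    omega
  obtain ⟨⟨x, hxEF⟩, hx0⟩ := Module.finrank_pos_iff_exists_ne_zero.mp hpos
  have hx : x ≠ 0 := fun h => hx0 (by simp [h])
  have hxE : x ∈ E := hxEF.1
  have hxF : x ∈ F := hxEF.2
  have haz : ∀ j : Fin n, ¬ j ≤ i → ⟪a j, x⟫_ℂ = 0 := by
    intro j hj
    have hker : E ≤ LinearMap.ker ((innerSL ℂ (a j) : H →L[ℂ] ℂ) : H →ₗ[ℂ] ℂ) := by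
      rw [hE, Submodule.span_le]
      rintro y ⟨⟨k, hk⟩, rfl⟩
      simp only [SetLike.mem_coe, LinearMap.mem_ker]
      have := (orthonormal_iff_ite.mp a.orthonormal) j k
      have hjk : j ≠ k := fun h => hj (h ▸ Finset.mem_Iic.mp hk)
      simpa [hjk] using this
    exact hker hxE
  have hcz : ∀ j : Fin n, ¬ i ≤ j → ⟪c j, x⟫_ℂ = 0 := by
    intro j hj
    have hker : F ≤ LinearMap.ker ((innerSL ℂ (c j) : H →L[ℂ] ℂ) : H →ₗ[ℂ] ℂ) := by
      rw [hF, Submodule.span_le]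
      rintro y ⟨⟨k, hk⟩, rfl⟩
      simp only [SetLike.mem_coe, LinearMap.mem_ker]
      have := (orthonormal_iff_ite.mp c.orthonormal) j k
      have hjk : j ≠ k := fun h => hj (h ▸ Finset.mem_Ici.mp hk)
      simpa [hjk] using this
    exact hker hxF
  have hAx : Complex.re ⟪x, A x⟫_ℂ ≤ α i * ‖x‖ ^ 2 := by
    rw [diag_inner_formula a A α hA x, ← parseval_fin a x, Finset.mul_sum]
    refine Finset.sum_le_sum fun j _ => ?_
    by_cases hj : j ≤ i
    · exact mul_le_mul_of_nonneg_right (hmα hj) (by positivity)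
    · rw [haz j hj]; simp
  have hBx : β i * ‖x‖ ^ 2 ≤ Complex.re ⟪x, B x⟫_ℂ := by
    rw [diag_inner_formula c B β hB x, ← parseval_fin c x, Finset.mul_sum]
    refine Finset.sum_le_sum fun j _ => ?_
    by_cases hj : i ≤ j
    · exact mul_le_mul_of_nonneg_right (hmβ hj) (by positivity)
    · rw [hcz j hj]; simp
  have hdiff : Complex.re ⟪x, B x⟫_ℂ - Complex.re ⟪x, A x⟫_ℂ ≤ ‖A - B‖ * ‖x‖ ^ 2 := by
    have h1 : Complex.re ⟪x, B x⟫_ℂ - Complex.re ⟪x, A x⟫_ℂ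
        = Complex.re ⟪x, (B - A) x⟫_ℂ := by
      rw [ContinuousLinearMap.sub_apply, inner_sub_right, Complex.sub_re]
    rw [h1]
    calc Complex.re ⟪x, (B - A) x⟫_ℂ ≤ ‖⟪x, (B - A) x⟫_ℂ‖ := Complex.re_le_norm _
      _ ≤ ‖x‖ * ‖(B - A) x‖ := norm_inner_le_norm _ _
      _ ≤ ‖x‖ * (‖B - A‖ * ‖x‖) := by gcongr; exact (B - A).le_opNorm x
      _ = ‖A - B‖ * ‖x‖ ^ 2 := by rw [norm_sub_rev]; ring
  have hx2 : 0 < ‖x‖ ^ 2 := pow_pos (norm_pos_iff.mpr hx) 2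
  have hfin : (β i - α i) * ‖x‖ ^ 2 ≤ ‖A - B‖ * ‖x‖ ^ 2 := by nlinarith
  exact le_of_mul_le_mul_right (by linarith [hfin]) hx2

end AuxAll

lemma abs_sin_sub_le {x : ℝ} (hx : |x| ≤ 1) : |Real.sin x - x| ≤ |x| ^ 3 := by
  have key : ∀ y : ℝ, 0 ≤ y → y ≤ 1 → |Real.sin y - y| ≤ y ^ 3 := by
    intro y hy0 hy1
    rcases eq_or_lt_of_le hy0 with h | hy
    · simp [← h]
    · have h1 : Real.sin y < y := Real.sin_lt hy
      have h2 : y - y ^ 3 / 4 < Real.sin y := by have := Real.sin_gt_sub_cube hy; nlinarith [pow_pos hy 3]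
      have h3 : (0:ℝ) ≤ y ^ 3 := by positivity
      rw [abs_sub_comm, abs_of_pos (by linarith)]
      linarith
  rcases le_or_gt 0 x with h | h
  · rw [abs_of_nonneg h] at hx ⊢
    exact key x h hx
  · have h1 : |Real.sin (-x) - (-x)| ≤ (-x) ^ 3 := by
      apply key (-x) (by linarith)
      rw [abs_of_neg h] at hx; linarith
    rw [Real.sin_neg] at h1
    rw [abs_of_neg h]
    calc |Real.sin x - x| = |(-(Real.sin x - x))| := (abs_neg _).symm
      _ = |(-Real.sin x - -x)| := by ring_nf
      _ ≤ (-x) ^ 3 := h1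

lemma key_scalar (t θ : ℝ) (ht : t ≠ 0) :
    (2 * (t : ℂ) * Complex.I)⁻¹ *
      (Complex.exp ((θ : ℂ) * Complex.I) - Complex.exp (((-θ : ℝ) : ℂ) * Complex.I)) =
      ((Real.sin θ / t : ℝ) : ℂ) := by
  rw [Complex.ofReal_neg, Complex.exp_mul_I, Complex.exp_mul_I, Complex.cos_neg, Complex.sin_neg,
    ← Complex.ofReal_sin]
  have htC : (t : ℂ) ≠ 0 := Complex.ofReal_ne_zero.mpr ht
  rw [Complex.ofReal_div]
  field_simp [Complex.I_ne_zero]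
  ring

set_option maxHeartbeats 1600000 in
/-- Let `H₁, H₂` be self-adjoint operators on finite-dimensional Hilbert
spaces of the same dimension `n`, with increasing eigenvalue lists `λ¹, λ²` (with
multiplicity, realized by orthonormal eigenbases). For every `ε > 0` there is `δ > 0`
such that if some unitary `W : ℋ₁ → ℋ₂` satisfies
`max_{|t|≤1} ‖e^{itH₂} W e^{−itH₁} − W‖ < δ`, then `|λ¹ᵢ − λ²ᵢ| < ε` for all `i`. -/
theorem eigenvalue_comparison_almost_intertwining
    {H1 H2 : Type*}
    [NormedAddCommGroup H1] [InnerProductSpace ℂ H1] [FiniteDimensional ℂ H1]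
    [NormedAddCommGroup H2] [InnerProductSpace ℂ H2] [FiniteDimensional ℂ H2]
    (n : ℕ) (T1 : H1 →L[ℂ] H1) (T2 : H2 →L[ℂ] H2)
    (hT1 : IsSelfAdjoint T1) (hT2 : IsSelfAdjoint T2)
    (lam1 lam2 : Fin n → ℝ) (hm1 : Monotone lam1) (hm2 : Monotone lam2)
    (b1 : OrthonormalBasis (Fin n) ℂ H1) (b2 : OrthonormalBasis (Fin n) ℂ H2)
    (he1 : ∀ i, T1 (b1 i) = (lam1 i : ℂ) • b1 i)
    (he2 : ∀ i, T2 (b2 i) = (lam2 i : ℂ) • b2 i) :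
    ∀ ε > 0, ∃ δ > 0, ∀ W : H1 →L[ℂ] H2,
      W.comp (ContinuousLinearMap.adjoint W) = 1 →
      (ContinuousLinearMap.adjoint W).comp W = 1 →
      (∀ t : ℝ, |t| ≤ 1 →
        ‖(NormedSpace.exp (((t : ℂ) * Complex.I) • T2)).comp
            (W.comp (NormedSpace.exp ((-(t : ℂ) * Complex.I) • T1))) - W‖ < δ) →
      ∀ i, |lam1 i - lam2 i| < ε := by
  intro ε hε
  set M : ℝ := 1 + ∑ j, (|lam1 j| + |lam2 j|) with hM
  have hsum0 : (0:ℝ) ≤ ∑ j, (|lam1 j| + |lam2 j|) :=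
    Finset.sum_nonneg fun j _ => by positivity
  have hM1 : 1 ≤ M := by simp only [hM]; linarith
  have hM0 : 0 < M := by linarith
  have hMl1 : ∀ j, |lam1 j| ≤ M := by
    intro j
    have h := Finset.single_le_sum (f := fun k : Fin n => |lam1 k| + |lam2 k|)
      (fun k _ => by positivity) (Finset.mem_univ j)
    have h' : |lam1 j| + |lam2 j| ≤ ∑ k, (|lam1 k| + |lam2 k|) := h
    have := abs_nonneg (lam2 j)
    simp only [hM]; linarith
  have hMl2 : ∀ j, |lam2 j| ≤ M := by
    intro j
    have h := Finset.single_le_sum (f := fun k : Fin n => |lam1 k| + |lam2 k|)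
      (fun k _ => by positivity) (Finset.mem_univ j)
    have h' : |lam1 j| + |lam2 j| ≤ ∑ k, (|lam1 k| + |lam2 k|) := h
    have := abs_nonneg (lam1 j)
    simp only [hM]; linarith
  set h : ℝ := min (1 / M) (ε / (8 * M ^ 3)) with hh
  have hh0 : 0 < h := lt_min (by positivity) (by positivity)
  have hhM : h * M ≤ 1 := by
    have h1 : h ≤ 1 / M := min_le_left _ _
    calc h * M ≤ (1 / M) * M := by gcongr
      _ = 1 := by field_simp
  have hhM3 : h * M ^ 3 ≤ ε / 8 := by
    have h1 : h ≤ ε / (8 * M ^ 3) := min_le_right _ _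
    calc h * M ^ 3 ≤ (ε / (8 * M ^ 3)) * M ^ 3 := by gcongr
      _ = ε / 8 := by field_simp
  have hhle1 : h ≤ 1 := by
    have h1 : h ≤ 1 / M := min_le_left _ _
    have : 1 / M ≤ 1 := by
      rw [div_le_one hM0]; exact hM1
    linarith
  refine ⟨h * ε / 8, by positivity, ?_⟩
  intro W h1 h2 hyp i
  set adjw := ContinuousLinearMap.adjoint W with hadj
  have hleft : ∀ x : H1, adjw (W x) = x := fun x => by
    have := congrArg (fun T : H1 →L[ℂ] H1 => T x) h2; simpa using this
  have hright : ∀ y : H2, W (adjw y) = y := fun y => by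
    have := congrArg (fun T : H2 →L[ℂ] H2 => T y) h1; simpa using this
  have hWnorm : ∀ x : H1, ‖W x‖ = ‖x‖ := by
    intro x
    have hi : ⟪W x, W x⟫_ℂ = ⟪x, x⟫_ℂ := by
      rw [← ContinuousLinearMap.adjoint_inner_left, ← hadj, hleft]
    rw [inner_self_eq_norm_sq_to_K, inner_self_eq_norm_sq_to_K] at hi
    have hre : ‖W x‖ ^ 2 = ‖x‖ ^ 2 := by exact_mod_cast hi
    exact (sq_eq_sq₀ (norm_nonneg _) (norm_nonneg _)).mp (by exact_mod_cast hre)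
  have hWadjnorm : ∀ y : H2, ‖adjw y‖ = ‖y‖ := by
    intro y
    have hi : ⟪adjw y, adjw y⟫_ℂ = ⟪y, y⟫_ℂ := by
      rw [hadj, ContinuousLinearMap.adjoint_inner_left, ← hadj, hright]
    rw [inner_self_eq_norm_sq_to_K, inner_self_eq_norm_sq_to_K] at hi
    have hre : ‖adjw y‖ ^ 2 = ‖y‖ ^ 2 := by exact_mod_cast hi
    exact (sq_eq_sq₀ (norm_nonneg _) (norm_nonneg _)).mp (by exact_mod_cast hre)
  have hadjop : ‖adjw‖ ≤ 1 :=
    adjw.opNorm_le_bound zero_le_one fun y => by rw [hWadjnorm y, one_mul]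
  -- the conjugated orthonormal basis
  let eW : H1 ≃ₗᵢ[ℂ] H2 :=
    { toFun := W
      map_add' := W.map_add
      map_smul' := W.map_smul
      invFun := adjw
      left_inv := hleft
      right_inv := hright
      norm_map' := hWnorm }
  let c : OrthonormalBasis (Fin n) ℂ H1 := b2.map eW.symm
  have hc : ∀ j, c j = adjw (b2 j) := fun j => rfl
  set B : H1 →L[ℂ] H1 := adjw.comp (T2.comp W) with hBdef
  have hBc : ∀ j, B (c j) = ((lam2 j : ℝ) : ℂ) • c j := by
    intro j
    rw [hBdef, ContinuousLinearMap.comp_apply, ContinuousLinearMap.comp_apply, hc, hright,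
      he2, map_smul]
  -- eigen relations for exponentials
  have hX1 : ∀ (t : ℝ) (j : Fin n), NormedSpace.exp (((t : ℂ) * Complex.I) • T1) (b1 j)
      = Complex.exp (((t * lam1 j : ℝ) : ℂ) * Complex.I) • b1 j := by
    intro t j
    rw [exp_apply_eigenvector _ _ ((t : ℂ) * Complex.I * (lam1 j : ℂ))
      (by rw [ContinuousLinearMap.smul_apply, he1, smul_smul])]
    congr 2
    push_cast; ring
  have hX2 : ∀ (t : ℝ) (j : Fin n), NormedSpace.exp (((t : ℂ) * Complex.I) • T2) (b2 j)
      = Complex.exp (((t * lam2 j : ℝ) : ℂ) * Complex.I) • b2 j := by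
    intro t j
    rw [exp_apply_eigenvector _ _ ((t : ℂ) * Complex.I * (lam2 j : ℂ))
      (by rw [ContinuousLinearMap.smul_apply, he2, smul_smul])]
    congr 2
    push_cast; ring
  -- conjugated evolution
  set A : ℝ → (H1 →L[ℂ] H1) :=
    fun t => adjw.comp ((NormedSpace.exp (((t : ℂ) * Complex.I) • T2)).comp W) with hA
  have hAc : ∀ (t : ℝ) (j : Fin n),
      A t (c j) = Complex.exp (((t * lam2 j : ℝ) : ℂ) * Complex.I) • c j := by
    intro t j
    rw [hA]
    simp only [ContinuousLinearMap.comp_apply]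
    rw [hc, hright, hX2, map_smul]
  have hexpnorm1 : ∀ t : ℝ, ‖NormedSpace.exp (((t : ℂ) * Complex.I) • T1)‖ ≤ 1 := by
    intro t
    refine diag_norm_le b1 _ _ (hX1 t) 1 zero_le_one fun j => ?_
    rw [Complex.norm_exp_ofReal_mul_I]
  -- inverse property of exp
  have hinv1 : ∀ (t : ℝ) (x : H1),
      NormedSpace.exp ((-(t : ℂ) * Complex.I) • T1)
        (NormedSpace.exp (((t : ℂ) * Complex.I) • T1) x) = x := by
    intro t x
    have hcomm : Commute ((-(t : ℂ) * Complex.I) • T1) (((t : ℂ) * Complex.I) • T1) :=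
      ((Commute.refl T1).smul_left _).smul_right _
    have hzero : (-(t : ℂ) * Complex.I) • T1 + ((t : ℂ) * Complex.I) • T1 = 0 := by
      rw [← add_smul]
      have : -(t : ℂ) * Complex.I + (t : ℂ) * Complex.I = 0 := by ring
      rw [this, zero_smul]
    let +nondep : NormedAlgebra ℚ (H1 →L[ℂ] H1) := .restrictScalars ℚ ℂ _
    have hmul := NormedSpace.exp_add_of_commute hcomm
    rw [hzero, NormedSpace.exp_zero] at hmul
    have := congrArg (fun T : H1 →L[ℂ] H1 => T x) hmul.symm
    simpa [ContinuousLinearMap.mul_apply] using this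
  -- difference identity
  have hdiffop : ∀ t : ℝ,
      A t - NormedSpace.exp (((t : ℂ) * Complex.I) • T1)
      = adjw.comp ((((NormedSpace.exp (((t : ℂ) * Complex.I) • T2)).comp
          (W.comp (NormedSpace.exp ((-(t : ℂ) * Complex.I) • T1)))) - W).comp
          (NormedSpace.exp (((t : ℂ) * Complex.I) • T1))) := by
    intro t
    ext x
    simp only [hA, ContinuousLinearMap.comp_apply, ContinuousLinearMap.sub_apply, map_sub,
      hinv1, hleft]
  have hAbound : ∀ t : ℝ, |t| ≤ 1 →
      ‖A t - NormedSpace.exp (((t : ℂ) * Complex.I) • T1)‖ < h * ε / 8 := by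
    intro t ht
    rw [hdiffop t]
    set D := ((NormedSpace.exp (((t : ℂ) * Complex.I) • T2)).comp
      (W.comp (NormedSpace.exp ((-(t : ℂ) * Complex.I) • T1)))) - W with hD
    have hDnorm : ‖D‖ < h * ε / 8 := hyp t ht
    have hDnonneg : (0:ℝ) ≤ ‖D‖ := norm_nonneg _
    calc ‖adjw.comp (D.comp (NormedSpace.exp (((t : ℂ) * Complex.I) • T1)))‖
        ≤ ‖adjw‖ * ‖D.comp (NormedSpace.exp (((t : ℂ) * Complex.I) • T1))‖ :=
          ContinuousLinearMap.opNorm_comp_le _ _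
      _ ≤ 1 * (‖D‖ * ‖NormedSpace.exp (((t : ℂ) * Complex.I) • T1)‖) := by
          gcongr
          exact ContinuousLinearMap.opNorm_comp_le _ _
      _ ≤ 1 * (‖D‖ * 1) := by gcongr; exact hexpnorm1 t
      _ = ‖D‖ := by ring
      _ < h * ε / 8 := hDnorm
  -- the smoothed operators
  set z : ℂ := (2 * (h : ℂ) * Complex.I)⁻¹ with hz
  set S1 : H1 →L[ℂ] H1 := z • (NormedSpace.exp (((h : ℂ) * Complex.I) • T1)
    - NormedSpace.exp ((((-h : ℝ) : ℂ) * Complex.I) • T1)) with hS1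
  set S2 : H1 →L[ℂ] H1 := z • (A h - A (-h)) with hS2
  have hhne : h ≠ 0 := ne_of_gt hh0
  -- eigenvalues of S1 - T1
  have hS1T1 : ‖S1 - T1‖ ≤ ε / 8 := by
    have heig : ∀ j, (S1 - T1) (b1 j)
        = (((Real.sin (h * lam1 j) / h - lam1 j : ℝ) : ℂ)) • b1 j := by
      intro j
      rw [ContinuousLinearMap.sub_apply, hS1, ContinuousLinearMap.smul_apply,
        ContinuousLinearMap.sub_apply, hX1 h j, he1]
      have hx1neg := hX1 (-h) j
      rw [show (-h) * lam1 j = -(h * lam1 j) by ring] at hx1neg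
      rw [hx1neg, smul_sub, smul_smul, smul_smul, ← sub_smul, ← sub_smul]
      congr 1
      rw [← mul_sub, key_scalar h (h * lam1 j) hhne]
      push_cast
      ring
    refine diag_norm_le b1 _ _ heig (ε / 8) (by positivity) fun j => ?_
    rw [Complex.norm_real, Real.norm_eq_abs]
    have hstep : Real.sin (h * lam1 j) / h - lam1 j = (Real.sin (h * lam1 j) - h * lam1 j) / h := by
      field_simp
    rw [hstep, abs_div, abs_of_pos hh0]
    have harg : |h * lam1 j| ≤ 1 := by
      rw [abs_mul, abs_of_pos hh0]
      calc h * |lam1 j| ≤ h * M := by gcongr; exact hMl1 j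
        _ ≤ 1 := hhM
    have hsin := abs_sin_sub_le harg
    have habs3 : |h * lam1 j| ^ 3 ≤ h ^ 3 * M ^ 3 := by
      rw [abs_mul, abs_of_pos hh0, mul_pow]
      exact mul_le_mul_of_nonneg_left (pow_le_pow_left₀ (abs_nonneg _) (hMl1 j) 3)
        (by positivity)
    have hfin : |Real.sin (h * lam1 j) - h * lam1 j| / h ≤ h ^ 2 * M ^ 3 := by
      rw [div_le_iff₀ hh0]
      calc |Real.sin (h * lam1 j) - h * lam1 j| ≤ |h * lam1 j| ^ 3 := hsin
        _ ≤ h ^ 3 * M ^ 3 := habs3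
        _ = h ^ 2 * M ^ 3 * h := by ring
    calc |Real.sin (h * lam1 j) - h * lam1 j| / h ≤ h ^ 2 * M ^ 3 := hfin
      _ ≤ h * M ^ 3 := by
          have hsq : h ^ 2 ≤ h := by nlinarith
          exact mul_le_mul_of_nonneg_right hsq (by positivity)
      _ ≤ ε / 8 := hhM3
  -- eigenvalues of S2 - B
  have hS2B : ‖S2 - B‖ ≤ ε / 8 := by
    have heig : ∀ j, (S2 - B) (c j)
        = (((Real.sin (h * lam2 j) / h - lam2 j : ℝ) : ℂ)) • c j := by
      intro j
      rw [ContinuousLinearMap.sub_apply, hS2, ContinuousLinearMap.smul_apply,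
        ContinuousLinearMap.sub_apply, hAc h j, hBc]
      have hx2neg := hAc (-h) j
      rw [show (-h) * lam2 j = -(h * lam2 j) by ring] at hx2neg
      rw [hx2neg, smul_sub, smul_smul, smul_smul, ← sub_smul, ← sub_smul]
      congr 1
      rw [← mul_sub, key_scalar h (h * lam2 j) hhne]
      push_cast
      ring
    refine diag_norm_le c _ _ heig (ε / 8) (by positivity) fun j => ?_
    rw [Complex.norm_real, Real.norm_eq_abs]
    have hstep : Real.sin (h * lam2 j) / h - lam2 j = (Real.sin (h * lam2 j) - h * lam2 j) / h := by
      field_simp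
    rw [hstep, abs_div, abs_of_pos hh0]
    have harg : |h * lam2 j| ≤ 1 := by
      rw [abs_mul, abs_of_pos hh0]
      calc h * |lam2 j| ≤ h * M := by gcongr; exact hMl2 j
        _ ≤ 1 := hhM
    have hsin := abs_sin_sub_le harg
    have habs3 : |h * lam2 j| ^ 3 ≤ h ^ 3 * M ^ 3 := by
      rw [abs_mul, abs_of_pos hh0, mul_pow]
      exact mul_le_mul_of_nonneg_left (pow_le_pow_left₀ (abs_nonneg _) (hMl2 j) 3)
        (by positivity)
    have hfin : |Real.sin (h * lam2 j) - h * lam2 j| / h ≤ h ^ 2 * M ^ 3 := by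
      rw [div_le_iff₀ hh0]
      calc |Real.sin (h * lam2 j) - h * lam2 j| ≤ |h * lam2 j| ^ 3 := hsin
        _ ≤ h ^ 3 * M ^ 3 := habs3
        _ = h ^ 2 * M ^ 3 * h := by ring
    calc |Real.sin (h * lam2 j) - h * lam2 j| / h ≤ h ^ 2 * M ^ 3 := hfin
      _ ≤ h * M ^ 3 := by
          have hsq : h ^ 2 ≤ h := by nlinarith
          exact mul_le_mul_of_nonneg_right hsq (by positivity)
      _ ≤ ε / 8 := hhM3
  -- middle bound
  have hS1S2 : ‖S1 - S2‖ < ε / 4 := by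
    have hzn : ‖z‖ = (2 * h)⁻¹ := by
      rw [hz, norm_inv, norm_mul, norm_mul, Complex.norm_I, Complex.norm_real,
        Real.norm_eq_abs]
      simp [abs_of_pos hh0]
    have hid : S1 - S2 = z • ((NormedSpace.exp (((h : ℂ) * Complex.I) • T1) - A h)
        - (NormedSpace.exp ((((-h : ℝ) : ℂ) * Complex.I) • T1) - A (-h))) := by
      rw [hS1, hS2, ← smul_sub]
      congr 1
      abel
    have hb1 : ‖NormedSpace.exp (((h : ℂ) * Complex.I) • T1) - A h‖ < h * ε / 8 := by
      rw [norm_sub_rev]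
      exact hAbound h (by rw [abs_of_pos hh0]; exact hhle1)
    have hb2 : ‖NormedSpace.exp ((((-h : ℝ) : ℂ) * Complex.I) • T1) - A (-h)‖ < h * ε / 8 := by
      rw [norm_sub_rev]
      exact hAbound (-h) (by rw [abs_neg, abs_of_pos hh0]; exact hhle1)
    rw [hid]
    calc ‖z • ((NormedSpace.exp (((h : ℂ) * Complex.I) • T1) - A h)
        - (NormedSpace.exp ((((-h : ℝ) : ℂ) * Complex.I) • T1) - A (-h)))‖
        ≤ ‖z‖ * ‖(NormedSpace.exp (((h : ℂ) * Complex.I) • T1) - A h)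
        - (NormedSpace.exp ((((-h : ℝ) : ℂ) * Complex.I) • T1) - A (-h))‖ := ContinuousLinearMap.opNorm_smul_le _ _
      _ ≤ ‖z‖ * (‖NormedSpace.exp (((h : ℂ) * Complex.I) • T1) - A h‖
          + ‖NormedSpace.exp ((((-h : ℝ) : ℂ) * Complex.I) • T1) - A (-h)‖) := by
          gcongr
          exact norm_sub_le _ _
      _ < ‖z‖ * (h * ε / 8 + h * ε / 8) := by
          have hzpos : 0 < ‖z‖ := by rw [hzn]; positivity
          exact mul_lt_mul_of_pos_left (by linarith) hzpos
      _ = ε / 8 := by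
          rw [hzn]
          field_simp
          ring
      _ < ε / 4 := by linarith
  -- Weyl comparison
  have htri : ‖T1 - B‖ < ε := by
    have h4 := dist_triangle4 T1 S1 S2 B
    rw [dist_eq_norm, dist_eq_norm, dist_eq_norm, dist_eq_norm] at h4
    have e1 : ‖T1 - S1‖ = ‖S1 - T1‖ := norm_sub_rev _ _
    calc ‖T1 - B‖ ≤ ‖T1 - S1‖ + ‖S1 - S2‖ + ‖S2 - B‖ := h4
      _ < ε / 8 + ε / 4 + ε / 8 := by
          rw [e1]
          have := hS1T1
          have := hS2B
          have := hS1S2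
          linarith
      _ < ε := by linarith
  have hw1 : lam2 i - lam1 i ≤ ‖T1 - B‖ :=
    weyl_one_sided T1 B lam1 lam2 hm1 hm2 b1 c he1 hBc i
  have hw2 : lam1 i - lam2 i ≤ ‖T1 - B‖ := by
    have := weyl_one_sided B T1 lam2 lam1 hm2 hm1 c b1 hBc he1 i
    rwa [norm_sub_rev] at this
  rw [abs_sub_lt_iff]
  constructor <;> linarith
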